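/- Let (Ω, F, μ) be a probability space, m ⊆ F a sub-σ-algebra, and r ∈ (0,1). For all bounded measurable functions f, g : Ω → ℝ with f ≥ 0 and g ≥ 0, and every λ ∈ [0,1], the conditional expectations satisfy, μ-almost everywhere: (μ[(λ·f + (1−λ)·g)^r | m])^{1/r} ≥ λ·(μ[f^r | m])^{1/r} + (1−λ)·(μ[g^r | m])^{1/r}. -/

import Mathlib

open MeasureTheory

/-- superadditivity of `(x,y) ↦ x^r * y^(1-r)` for `r ∈ (0,1)`. -/
lemma rpow_mul_rpow_superadd {r : ℝ} (hr0 : 0 < r) (hr1 : r < 1)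
    {s t u v : ℝ} (hs : 0 ≤ s) (ht : 0 ≤ t) (hu : 0 ≤ u) (hv : 0 ≤ v) :
    s ^ r * u ^ (1 - r) + t ^ r * v ^ (1 - r) ≤ (s + t) ^ r * (u + v) ^ (1 - r) := by
  have h1r : 0 < 1 - r := by linarith
  rcases eq_or_lt_of_le (add_nonneg hs ht) with hst | hst
  · have hs0 : s = 0 := by linarith [ht, hs]
    have ht0 : t = 0 := by linarith [hs]
    simp [hs0, ht0, Real.zero_rpow hr0.ne']
  rcases eq_or_lt_of_le (add_nonneg hu hv) with huv | huv
  · have hu0 : u = 0 := by linarith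
    have hv0 : v = 0 := by linarith
    simp [hu0, hv0, Real.zero_rpow h1r.ne']
  have key : ∀ a b : ℝ, 0 ≤ a → 0 ≤ b →
      a ^ r * b ^ (1 - r) ≤ (s + t) ^ r * (u + v) ^ (1 - r) * (r * (a / (s + t)) + (1 - r) * (b / (u + v))) := by
    intro a b ha hb
    have h := Real.geom_mean_le_arith_mean2_weighted hr0.le h1r.le
      (div_nonneg ha hst.le) (div_nonneg hb huv.le) (by ring)
    have heq : a ^ r * b ^ (1 - r)
        = (s + t) ^ r * (u + v) ^ (1 - r) * ((a / (s + t)) ^ r * (b / (u + v)) ^ (1 - r)) := by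
      rw [Real.div_rpow ha hst.le, Real.div_rpow hb huv.le]
      field_simp [ne_of_gt (Real.rpow_pos_of_pos hst r), ne_of_gt (Real.rpow_pos_of_pos huv (1 - r))]
    rw [heq]
    exact mul_le_mul_of_nonneg_left h
      (mul_nonneg (Real.rpow_nonneg hst.le r) (Real.rpow_nonneg huv.le (1 - r)))
  have h1 := key s u hs hu
  have h2 := key t v ht hv
  have hsum : s ^ r * u ^ (1 - r) + t ^ r * v ^ (1 - r)
      ≤ (s + t) ^ r * (u + v) ^ (1 - r) *
        ((r * (s / (s + t)) + (1 - r) * (u / (u + v))) + (r * (t / (s + t)) + (1 - r) * (v / (u + v)))) := by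
    rw [mul_add]; exact add_le_add h1 h2
  refine hsum.trans (le_of_eq ?_)
  have e1 : s / (s + t) + t / (s + t) = 1 := by field_simp
  have e2 : u / (u + v) + v / (u + v) = 1 := by field_simp
  have e3 : (r * (s / (s + t)) + (1 - r) * (u / (u + v))) + (r * (t / (s + t)) + (1 - r) * (v / (u + v)))
      = r * (s / (s + t) + t / (s + t)) + (1 - r) * (u / (u + v) + v / (u + v)) := by ring
  rw [e3, e1, e2]; ring

theorem condexp_power_certainty_equivalent_concave
    {Ω : Type*} {m F : MeasurableSpace Ω} (hm : m ≤ F)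
    (μ : @Measure Ω F) [IsProbabilityMeasure μ]
    (r : ℝ) (hr0 : 0 < r) (hr1 : r < 1)
    (f g : Ω → ℝ) (hf : Measurable[F] f) (hg : Measurable[F] g)
    (Cf Cg : ℝ) (hfb : ∀ ω, |f ω| ≤ Cf) (hgb : ∀ ω, |g ω| ≤ Cg)
    (hf0 : ∀ ω, 0 ≤ f ω) (hg0 : ∀ ω, 0 ≤ g ω)
    (l : ℝ) (hl0 : 0 ≤ l) (hl1 : l ≤ 1) :
    ∀ᵐ ω ∂μ,
      l * ((μ[(fun ω => f ω ^ r) | m]) ω) ^ (1 / r)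
        + (1 - l) * ((μ[(fun ω => g ω ^ r) | m]) ω) ^ (1 / r)
      ≤ ((μ[(fun ω => (l * f ω + (1 - l) * g ω) ^ r) | m]) ω) ^ (1 / r) := by
  have hl1' : 0 ≤ 1 - l := by linarith
  have h1r : 0 < 1 - r := by linarith
  set h : Ω → ℝ := fun ω => l * f ω + (1 - l) * g ω with hh_def
  have hh_meas : Measurable[F] h := (measurable_const.mul hf).add (measurable_const.mul hg)
  have hh0 : ∀ ω, 0 ≤ h ω := fun ω =>
    add_nonneg (mul_nonneg hl0 (hf0 ω)) (mul_nonneg hl1' (hg0 ω))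
  have hhb : ∀ ω, |h ω| ≤ l * Cf + (1 - l) * Cg := by
    intro ω
    calc |h ω| ≤ |l * f ω| + |(1 - l) * g ω| := abs_add_le _ _
      _ = l * |f ω| + (1 - l) * |g ω| := by
          rw [abs_mul, abs_mul, abs_of_nonneg hl0, abs_of_nonneg hl1']
      _ ≤ l * Cf + (1 - l) * Cg := by
          gcongr <;> [exact hfb ω; exact hgb ω]
  -- integrability of powers of bounded measurable functions
  have hint : ∀ (φ : Ω → ℝ) (Cφ : ℝ), Measurable[F] φ → (∀ ω, |φ ω| ≤ Cφ) →
      Integrable (fun ω => φ ω ^ r) μ := by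
    intro φ Cφ hφ hb
    refine ⟨(hφ.pow_const r).aestronglyMeasurable, ?_⟩
    refine HasFiniteIntegral.of_bounded (C := |Cφ| ^ r) ?_
    filter_upwards with ω
    rw [Real.norm_eq_abs]
    calc |φ ω ^ r| ≤ |φ ω| ^ r := Real.abs_rpow_le_abs_rpow _ _
      _ ≤ |Cφ| ^ r := Real.rpow_le_rpow (abs_nonneg _) ((hb ω).trans (le_abs_self _)) hr0.le
  have hfr_int := hint f Cf hf hfb
  have hgr_int := hint g Cg hg hgb
  have hhr_int := hint h (l * Cf + (1 - l) * Cg) hh_meas hhb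
  set A : Ω → ℝ := μ[(fun ω => f ω ^ r) | m] with hA_def
  set B : Ω → ℝ := μ[(fun ω => g ω ^ r) | m] with hB_def
  set C : Ω → ℝ := μ[(fun ω => h ω ^ r) | m] with hC_def
  have hA0 : 0 ≤ᵐ[μ] A := condExp_nonneg (Filter.Eventually.of_forall fun ω => Real.rpow_nonneg (hf0 ω) r)
  have hB0 : 0 ≤ᵐ[μ] B := condExp_nonneg (Filter.Eventually.of_forall fun ω => Real.rpow_nonneg (hg0 ω) r)
  have hC0 : 0 ≤ᵐ[μ] C := condExp_nonneg (Filter.Eventually.of_forall fun ω => Real.rpow_nonneg (hh0 ω) r)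
  -- a.e. upper bounds on A and B
  have hbound : ∀ (φ : Ω → ℝ) (Cφ : ℝ), Integrable (fun ω => φ ω ^ r) μ → (∀ ω, 0 ≤ φ ω) → (∀ ω, |φ ω| ≤ Cφ) →
      ∀ᵐ ω ∂μ, (μ[(fun ω => φ ω ^ r) | m]) ω ≤ |Cφ| ^ r := by
    intro φ Cφ hφint h0 hb
    have hle : (fun ω => φ ω ^ r) ≤ᵐ[μ] fun _ => |Cφ| ^ r := by
      filter_upwards with ω
      exact Real.rpow_le_rpow (h0 ω) (((le_abs_self _).trans (hb ω)).trans (le_abs_self _)) hr0.le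
    have := condExp_mono (m := m) hφint (integrable_const _) hle
    rw [condExp_const hm] at this
    exact this
  have hAb := hbound f Cf hfr_int hf0 hfb
  have hBb := hbound g Cg hgr_int hg0 hgb
  set e : ℝ := (1 - r) / r with he_def
  have he0 : 0 ≤ e := le_of_lt (div_pos h1r hr0)
  have hAm : Measurable[m] A := stronglyMeasurable_condExp.measurable
  have hBm : Measurable[m] B := stronglyMeasurable_condExp.measurable
  set u1 : Ω → ℝ := fun ω => l * A ω ^ e with hu1_def
  set u2 : Ω → ℝ := fun ω => (1 - l) * B ω ^ e with hu2_def
  set D : Ω → ℝ := fun ω => l * A ω ^ (1/r) + (1 - l) * B ω ^ (1/r) with hD_def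
  have hu1m : StronglyMeasurable[m] u1 := (measurable_const.mul (hAm.pow_const e)).stronglyMeasurable
  have hu2m : StronglyMeasurable[m] u2 := (measurable_const.mul (hBm.pow_const e)).stronglyMeasurable
  have hDm : StronglyMeasurable[m] (fun ω => D ω ^ (1 - r)) :=
    (((measurable_const.mul (hAm.pow_const (1/r))).add
      (measurable_const.mul (hBm.pow_const (1/r)))).pow_const (1 - r)).stronglyMeasurable
  -- a.e. bounds for the m-measurable multipliers
  have hu1b : ∀ᵐ ω ∂μ, ‖u1 ω‖ ≤ l * (|Cf| ^ r) ^ e := by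
    filter_upwards [hA0, hAb] with ω h0 hb
    rw [Real.norm_eq_abs, abs_of_nonneg (mul_nonneg hl0 (Real.rpow_nonneg h0 e))]
    exact mul_le_mul_of_nonneg_left (Real.rpow_le_rpow h0 hb he0) hl0
  have hu2b : ∀ᵐ ω ∂μ, ‖u2 ω‖ ≤ (1 - l) * (|Cg| ^ r) ^ e := by
    filter_upwards [hB0, hBb] with ω h0 hb
    rw [Real.norm_eq_abs, abs_of_nonneg (mul_nonneg hl1' (Real.rpow_nonneg h0 e))]
    exact mul_le_mul_of_nonneg_left (Real.rpow_le_rpow h0 hb he0) hl1'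
  have hDb : ∀ᵐ ω ∂μ, ‖D ω ^ (1 - r)‖
      ≤ (l * (|Cf| ^ r) ^ (1/r) + (1 - l) * (|Cg| ^ r) ^ (1/r)) ^ (1 - r) := by
    filter_upwards [hA0, hB0, hAb, hBb] with ω hA hB hAb' hBb'
    have hD0 : 0 ≤ D ω := add_nonneg (mul_nonneg hl0 (Real.rpow_nonneg hA _))
      (mul_nonneg hl1' (Real.rpow_nonneg hB _))
    rw [Real.norm_eq_abs, abs_of_nonneg (Real.rpow_nonneg hD0 _)]
    refine Real.rpow_le_rpow hD0 ?_ h1r.le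
    have : D ω = l * A ω ^ (1/r) + (1 - l) * B ω ^ (1/r) := by rw [hD_def]
    rw [this]
    exact add_le_add
      (mul_le_mul_of_nonneg_left (Real.rpow_le_rpow hA hAb' (by positivity)) hl0)
      (mul_le_mul_of_nonneg_left (Real.rpow_le_rpow hB hBb' (by positivity)) hl1')
  -- integrability of the products
  have hφ1_int : Integrable (fun ω => u1 ω * f ω ^ r) μ :=
    hfr_int.bdd_mul ((hu1m.mono hm).aestronglyMeasurable) hu1b
  have hφ2_int : Integrable (fun ω => u2 ω * g ω ^ r) μ :=
    hgr_int.bdd_mul ((hu2m.mono hm).aestronglyMeasurable) hu2b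
  have hψ_int : Integrable (fun ω => D ω ^ (1 - r) * h ω ^ r) μ :=
    hhr_int.bdd_mul ((hDm.mono hm).aestronglyMeasurable) hDb
  -- the pointwise superadditivity inequality
  have hφψ : (fun ω => u1 ω * f ω ^ r + u2 ω * g ω ^ r)
      ≤ᵐ[μ] (fun ω => D ω ^ (1 - r) * h ω ^ r) := by
    filter_upwards [hA0, hB0] with ω hA hB
    have key := rpow_mul_rpow_superadd hr0 hr1 (mul_nonneg hl0 (hf0 ω)) (mul_nonneg hl1' (hg0 ω))
      (mul_nonneg hl0 (Real.rpow_nonneg hA (1/r))) (mul_nonneg hl1' (Real.rpow_nonneg hB (1/r)))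
    have hll : l ^ r * l ^ (1 - r) = l := by
      rw [← Real.rpow_add' hl0 (by norm_num)]; norm_num
    have hll' : (1 - l) ^ r * (1 - l) ^ (1 - r) = 1 - l := by
      rw [← Real.rpow_add' hl1' (by norm_num)]; norm_num
    have hee : (1/r) * (1 - r) = e := by rw [he_def]; ring
    have e1 : (l * f ω) ^ r * (l * A ω ^ (1/r)) ^ (1 - r) = u1 ω * f ω ^ r := by
      rw [Real.mul_rpow hl0 (hf0 ω), Real.mul_rpow hl0 (Real.rpow_nonneg hA _),
        ← Real.rpow_mul hA, hee]
      simp only [hu1_def]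
      linear_combination (f ω ^ r * A ω ^ e) * hll
    have e2 : ((1 - l) * g ω) ^ r * ((1 - l) * B ω ^ (1/r)) ^ (1 - r) = u2 ω * g ω ^ r := by
      rw [Real.mul_rpow hl1' (hg0 ω), Real.mul_rpow hl1' (Real.rpow_nonneg hB _),
        ← Real.rpow_mul hB, hee]
      simp only [hu2_def]
      linear_combination (g ω ^ r * B ω ^ e) * hll'
    have e3 : (l * f ω + (1 - l) * g ω) ^ r
          * (l * A ω ^ (1/r) + (1 - l) * B ω ^ (1/r)) ^ (1 - r)
        = D ω ^ (1 - r) * h ω ^ r := by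
      simp only [hD_def, hh_def]; ring
    rw [← e1, ← e2, ← e3]
    exact key
  -- conditional expectations of both sides, via the pull-out property
  have hφcond : μ[(fun ω => u1 ω * f ω ^ r + u2 ω * g ω ^ r)|m]
      =ᵐ[μ] fun ω => u1 ω * A ω + u2 ω * B ω := by
    have hadd : μ[(fun ω => u1 ω * f ω ^ r + u2 ω * g ω ^ r)|m]
        =ᵐ[μ] μ[(fun ω => u1 ω * f ω ^ r)|m] + μ[(fun ω => u2 ω * g ω ^ r)|m] :=
      condExp_add hφ1_int hφ2_int m
    have h1 : μ[(fun ω => u1 ω * f ω ^ r)|m] =ᵐ[μ] u1 * A :=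
      condExp_mul_of_stronglyMeasurable_left hu1m hφ1_int hfr_int
    have h2 : μ[(fun ω => u2 ω * g ω ^ r)|m] =ᵐ[μ] u2 * B :=
      condExp_mul_of_stronglyMeasurable_left hu2m hφ2_int hgr_int
    filter_upwards [hadd, h1, h2] with ω ea e1' e2'
    calc (μ[(fun ω => u1 ω * f ω ^ r + u2 ω * g ω ^ r)|m]) ω
        = (μ[(fun ω => u1 ω * f ω ^ r)|m]) ω + (μ[(fun ω => u2 ω * g ω ^ r)|m]) ω := ea
      _ = u1 ω * A ω + u2 ω * B ω := by rw [show (μ[(fun ω => u1 ω * f ω ^ r)|m]) ω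
            = u1 ω * A ω from e1', show (μ[(fun ω => u2 ω * g ω ^ r)|m]) ω
            = u2 ω * B ω from e2']
  have hψcond : μ[(fun ω => D ω ^ (1 - r) * h ω ^ r)|m]
      =ᵐ[μ] fun ω => D ω ^ (1 - r) * C ω := by
    have h1 : μ[(fun ω => D ω ^ (1 - r) * h ω ^ r)|m] =ᵐ[μ] (fun ω => D ω ^ (1 - r)) * C :=
      condExp_mul_of_stronglyMeasurable_left hDm hψ_int hhr_int
    filter_upwards [h1] with ω e1'
    exact e1'
  have hmono := condExp_mono (m := m) (hφ1_int.add hφ2_int) hψ_int hφψ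
  -- conclusion
  filter_upwards [hA0, hB0, hC0, hmono, hφcond, hψcond] with ω hA hB hC hle hφe hψe
  have hφe' : (μ[(fun ω => u1 ω * f ω ^ r + u2 ω * g ω ^ r)|m]) ω
      = u1 ω * A ω + u2 ω * B ω := hφe
  have hψe' : (μ[(fun ω => D ω ^ (1 - r) * h ω ^ r)|m]) ω = D ω ^ (1 - r) * C ω := hψe
  have hkey2 : u1 ω * A ω + u2 ω * B ω ≤ D ω ^ (1 - r) * C ω := by
    rw [← hφe', ← hψe']; exact hle
  have he1 : e + 1 = 1/r := by rw [he_def]; field_simp; ring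
  have hne : e + 1 ≠ 0 := by rw [he1]; exact one_div_ne_zero hr0.ne'
  have hAe : A ω ^ e * A ω = A ω ^ (1/r) := by
    rw [← he1, Real.rpow_add' hA hne, Real.rpow_one]
  have hBe : B ω ^ e * B ω = B ω ^ (1/r) := by
    rw [← he1, Real.rpow_add' hB hne, Real.rpow_one]
  have hDω : D ω = l * A ω ^ (1/r) + (1 - l) * B ω ^ (1/r) := by rw [hD_def]
  have hgoal1 : u1 ω * A ω + u2 ω * B ω = D ω := by
    simp only [hu1_def, hu2_def]
    rw [mul_assoc, mul_assoc, hAe, hBe, hDω]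
  have hkey3 : D ω ≤ D ω ^ (1 - r) * C ω := hgoal1 ▸ hkey2
  have hD0 : 0 ≤ D ω := by
    rw [hDω]
    exact add_nonneg (mul_nonneg hl0 (Real.rpow_nonneg hA _))
      (mul_nonneg hl1' (Real.rpow_nonneg hB _))
  rw [← hDω]
  rcases eq_or_lt_of_le hD0 with hDz | hDpos
  · rw [← hDz]
    exact Real.rpow_nonneg hC _
  · have hDr : D ω ^ r ≤ C ω := by
      have h2 : D ω ^ (1 - r) * D ω ^ r ≤ D ω ^ (1 - r) * C ω := by
        rw [← Real.rpow_add hDpos (1 - r) r, show (1 - r) + r = (1 : ℝ) by ring, Real.rpow_one]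
        exact hkey3
      exact le_of_mul_le_mul_left h2 (Real.rpow_pos_of_pos hDpos _)
    calc D ω = (D ω ^ r) ^ (1/r) := by
          rw [← Real.rpow_mul hD0, mul_one_div_cancel hr0.ne', Real.rpow_one]
      _ ≤ C ω ^ (1/r) := Real.rpow_le_rpow (Real.rpow_nonneg hD0 _) hDr (by positivity)
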